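/- Every Fractran program P gives rise to a Collatz-type function: letting d be the lcm of the denominators of P, there exist rationals a₀,…,a_{d−1}, b₀,…,b_{d−1} such that the total function f'_P (defined as f_P extended by f'_P(n)=1 when f_P(n) is undefined) satisfies f'_P(n) = a_r·n + b_r whenever n ≡ r (mod d), for all positive integers n, with f'_P(n) ∈ ℕ⁺ always; moreover for each residue r either b_r = 0, or a_r = 0 and b_r = 1. -/

import Mathlib

/-- One step of a Fractran program `P` on input `n`: multiply `n` by the first
fraction in the list whose product with `n` is an integer; `none` if no such fraction. -/
def fracStep (P : List ℚ) (n : ℕ) : Option ℕ :=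
  ((P.map (fun q => (n : ℚ) * q)).find? (fun x => x.den == 1)).map (fun x => x.num.toNat)

/-- `i`-fold iteration of the partial Fractran step function. -/
def fracIter (P : List ℚ) : ℕ → ℕ → Option ℕ
  | 0, n => some n
  | i + 1, n => (fracStep P n).bind (fracIter P i)

/-- `d`: the least common multiple of the denominators of the program. -/
def fracD (P : List ℚ) : ℕ := (P.map (fun q => q.den)).foldr Nat.lcm 1

/-- `a'_n = a_i · (d / b_i)` for the first fraction `a_i/b_i` of `P` such that
`n · a_i/b_i` is an integer; `none` if no such fraction exists. -/
def fracA' (P : List ℚ) (n : ℕ) : Option ℕ :=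
  (P.find? (fun q => ((n : ℚ) * q).den == 1)).map (fun q => q.num.toNat * (fracD P / q.den))

/-- `o_n = n · a_i/b_i` for the first fraction `a_i/b_i` of `P` such that
`n · a_i/b_i` is an integer; `none` if no such fraction exists. -/
def fracO (P : List ℚ) (n : ℕ) : Option ℕ :=
  (P.find? (fun q => ((n : ℚ) * q).den == 1)).map (fun q => ((n : ℚ) * q).num.toNat)

/-- `φ(n)`: the unique element of `{1, …, d}` congruent to `n` modulo `d`. -/
def phi (d n : ℕ) : ℕ := (n - 1) % d + 1


lemma den_mul_eq_one_iff (n : ℕ) (q : ℚ) : ((n : ℚ) * q).den = 1 ↔ q.den ∣ n := by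
  have hden : (q.den : ℚ) ≠ 0 := by exact_mod_cast q.den_ne_zero
  have hq : (q.den : ℚ) * q = (q.num : ℚ) := by
    nth_rewrite 2 [← Rat.num_div_den q]
    field_simp
  constructor
  · intro h
    have h1 : ((((n : ℚ) * q).num : ℚ)) = (n : ℚ) * q := (Rat.den_eq_one_iff _).mp h
    have h2 : (((((n : ℚ) * q).num * q.den : ℤ)) : ℚ) = (((n : ℤ) * q.num : ℤ) : ℚ) := by
      push_cast
      rw [h1, mul_assoc, mul_comm q, hq]
    have h3 : (((n : ℚ) * q).num * q.den : ℤ) = (n : ℤ) * q.num := by exact_mod_cast h2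
    have h4 : (q.den : ℤ) ∣ (n : ℤ) * q.num := Dvd.intro_left _ h3
    have h5 : q.den ∣ n * q.num.natAbs := by
      have := Int.natAbs_dvd_natAbs.mpr h4
      simpa [Int.natAbs_mul] using this
    exact (Nat.Coprime.dvd_of_dvd_mul_right q.reduced.symm) h5
  · rintro ⟨k, rfl⟩
    have : ((q.den * k : ℕ) : ℚ) * q = ((k * q.num : ℤ) : ℚ) := by
      push_cast; rw [← hq]; ring
    rw [this, Rat.den_intCast]

lemma den_dvd_fracD (P : List ℚ) (q : ℚ) (hq : q ∈ P) : q.den ∣ fracD P := by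
  induction P with
  | nil => cases hq
  | cons p l ih =>
    have hd : fracD (p :: l) = Nat.lcm p.den (fracD l) := rfl
    rcases List.mem_cons.mp hq with h | h
    · rw [h, hd]; exact Nat.dvd_lcm_left _ _
    · rw [hd]; exact (ih h).trans (Nat.dvd_lcm_right _ _)

lemma find?_congr' {α : Type*} (p p' : α → Bool) :
    ∀ l : List α, (∀ x ∈ l, p x = p' x) → l.find? p = l.find? p'
  | [], _ => rfl
  | a :: l, h => by
    simp only [List.find?]
    rw [h a List.mem_cons_self]
    cases p' a
    · exact find?_congr' p p' l fun x hx => h x (List.mem_cons_of_mem a hx)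
    · rfl

/-- Every Fractran program is a Collatz-type function: with `d` the lcm of the
denominators, there are rationals `a_r`, `b_r` (indexed by residues `r < d`) such
that the totalized step function `f'_P(n) = f_P(n)` (`:= 1` when undefined)
satisfies `f'_P(n) = a_r·n + b_r` for `n ≡ r (mod d)`, always yields a positive
integer, and for each residue `r` either `b_r = 0`, or `a_r = 0 ∧ b_r = 1`. -/
theorem fractran_is_collatz_function (P : List ℚ) (hpos : ∀ q ∈ P, 0 < q) :
    ∃ a b : ℕ → ℚ,
      (∀ r < fracD P, b r = 0 ∨ (a r = 0 ∧ b r = 1)) ∧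
      (∀ n : ℕ, 0 < n →
        (((fracStep P n).getD 1 : ℚ) = a (n % fracD P) * n + b (n % fracD P)) ∧
        0 < (fracStep P n).getD 1) := by
  refine ⟨fun r => (P.find? (fun q => ((r : ℚ) * q).den == 1)).getD 0,
    fun r => if (P.find? (fun q => ((r : ℚ) * q).den == 1)).isSome then 0 else 1, ?_, ?_⟩
  · intro r _
    cases h : P.find? (fun q => ((r : ℚ) * q).den == 1) with
    | none => right; simp [h]
    | some q => left; simp [h]
  · intro n hn
    set r := n % fracD P with hr
    have hfind : P.find? (fun q => ((n : ℚ) * q).den == 1)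
        = P.find? (fun q => ((r : ℚ) * q).den == 1) := by
      refine find?_congr' _ _ P fun q hq => ?_
      rw [Bool.eq_iff_iff]
      simp only [beq_iff_eq]
      rw [den_mul_eq_one_iff, den_mul_eq_one_iff]
      exact (Nat.dvd_mod_iff (den_dvd_fracD P q hq)).symm
    have hstep : fracStep P n
        = (P.find? (fun q => ((n : ℚ) * q).den == 1)).map (fun q => ((n : ℚ) * q).num.toNat) := by
      unfold fracStep
      rw [List.find?_map, Option.map_map]
      rfl
    cases h : P.find? (fun q => ((r : ℚ) * q).den == 1) with
    | none =>
      have : fracStep P n = none := by rw [hstep, hfind, h]; rfl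
      simp [this, h]
    | some q =>
      have hqmem : q ∈ P := List.mem_of_find?_eq_some h
      have hden1 : ((n : ℚ) * q).den = 1 := by
        have := List.find?_some (by rw [hfind]; exact h :
          P.find? (fun q => ((n : ℚ) * q).den == 1) = some q)
        simpa using this
      have hstep' : fracStep P n = some ((n : ℚ) * q).num.toNat := by
        rw [hstep, hfind, h]; rfl
      have hposq : 0 < (n : ℚ) * q := by
        have : (0 : ℚ) < n := by exact_mod_cast hn
        exact mul_pos this (hpos q hqmem)
      have hnum : 0 < ((n : ℚ) * q).num := Rat.num_pos.mpr hposq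
      have hcast : ((((n : ℚ) * q).num.toNat : ℕ) : ℚ) = (n : ℚ) * q := by
        have h1 : ((((n : ℚ) * q).num.toNat : ℕ) : ℤ) = ((n : ℚ) * q).num :=
          Int.toNat_of_nonneg hnum.le
        have h2 : ((((n : ℚ) * q).num.toNat : ℕ) : ℚ) = (((n : ℚ) * q).num : ℚ) := by
          exact_mod_cast h1
        rw [h2]
        exact (Rat.den_eq_one_iff _).mp hden1
      constructor
      · simp only [hstep', Option.getD_some, h, Option.getD_some, Option.isSome_some,
          if_true]
        rw [hcast]
        ring
      · rw [hstep']
        simp only [Option.getD_some]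
        omega
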